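/- arXiv:2108.10725 — 2 statements merged into one kernel-verified Lean document; each statement's English description precedes it below -/
import Mathlib

section
/- Let σ, ν be Minkowski velocities with ⟨σ,ν⟩ > 0. Then the active covariant Lorentz boost inverts the passive one: for every μ ∈ ℝ⁴, La(σ,ν)(Lp(σ,ν)μ) = μ. Equivalently, swapping the two parameterizing Minkowski velocities gives the inverse transformation: Lp(ν,σ)(Lp(σ,ν)μ) = μ. -/
noncomputable section

/-- Minkowski bilinear form on ℝ⁴ with signature +−−−. -/
def mink (u v : Fin 4 → ℝ) : ℝ := u 0 * v 0 - u 1 * v 1 - u 2 * v 2 - u 3 * v 3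

/-- Passive covariant Lorentz boost determined by Minkowski velocities σ, ν. -/
def Lp (c : ℝ) (σ ν μ : Fin 4 → ℝ) : Fin 4 → ℝ :=
  μ - (mink μ (ν + σ) / mink σ (ν + σ)) • (ν + σ) + (2 * mink μ ν / c ^ 2) • σ

/-- Active covariant Lorentz boost determined by Minkowski velocities σ, ν. -/
def La (c : ℝ) (σ ν μ : Fin 4 → ℝ) : Fin 4 → ℝ :=
  μ - (mink μ (ν + σ) / mink σ (ν + σ)) • (ν + σ) + (2 * mink μ σ / c ^ 2) • ν

lemma mink_add_left (u v w : Fin 4 → ℝ) : mink (u + v) w = mink u w + mink v w := by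
  simp [mink]; ring

lemma mink_sub_left (u v w : Fin 4 → ℝ) : mink (u - v) w = mink u w - mink v w := by
  simp [mink]; ring

lemma mink_smul_left (r : ℝ) (u w : Fin 4 → ℝ) : mink (r • u) w = r * mink u w := by
  simp [mink]; ring

lemma mink_add_right (u v w : Fin 4 → ℝ) : mink u (v + w) = mink u v + mink u w := by
  simp [mink]; ring

lemma mink_comm (u v : Fin 4 → ℝ) : mink u v = mink v u := by
  simp [mink]; ring

/-- With the symmetric value `mink ν (σ+ν) = mink σ (ν+σ)`, swapping parameters of the
passive boost gives the active boost. -/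
lemma Lp_swap_eq_La (c : ℝ) (σ ν : Fin 4 → ℝ) (h : mink ν (ν + σ) = mink σ (ν + σ)) :
    ∀ x, Lp c ν σ x = La c σ ν x := by
  intro x
  simp only [Lp, La, add_comm σ ν, h]

theorem active_inverts_passive (c : ℝ) (hc : 0 < c) (σ ν : Fin 4 → ℝ)
    (hσ : mink σ σ = c ^ 2) (hν : mink ν ν = c ^ 2)
    (hσν : 0 < mink σ ν) :
    ∀ μ : Fin 4 → ℝ,
      La c σ ν (Lp c σ ν μ) = μ ∧ Lp c ν σ (Lp c σ ν μ) = μ := by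
  have hc2 : (c : ℝ) ^ 2 ≠ 0 := by positivity
  have hd : mink σ (ν + σ) = mink σ ν + c ^ 2 := by
    rw [mink_add_right, hσ]
  have hdν : mink ν (ν + σ) = mink σ (ν + σ) := by
    rw [mink_add_right, mink_add_right, hσ, hν, mink_comm ν σ]; ring
  have hdpos : (0:ℝ) < mink σ ν + c ^ 2 := by positivity
  have hdne : mink σ ν + c ^ 2 ≠ 0 := ne_of_gt hdpos
  have main : ∀ μ : Fin 4 → ℝ, La c σ ν (Lp c σ ν μ) = μ := by
    intro μ
    have h1 : mink (Lp c σ ν μ) (ν + σ) =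
        -(mink μ (ν + σ)) + 2 * (mink σ ν + c ^ 2) * mink μ ν / c ^ 2 := by
      simp only [Lp, mink_add_left, mink_sub_left, mink_smul_left, mink_add_right,
        mink_comm ν σ, mink_comm σ μ, mink_comm ν μ, hσ, hν, hd]
      field_simp
      ring
    have h2 : mink (Lp c σ ν μ) σ = mink μ ν := by
      simp only [Lp, mink_add_left, mink_sub_left, mink_smul_left, mink_add_right,
        mink_comm ν σ, hσ]
      field_simp
      ring
    show Lp c σ ν μ - (mink (Lp c σ ν μ) (ν + σ) / mink σ (ν + σ)) • (ν + σ)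
        + (2 * mink (Lp c σ ν μ) σ / c ^ 2) • ν = μ
    rw [h1, h2, hd]
    funext i
    simp only [Lp, hd, Pi.add_apply, Pi.sub_apply, Pi.smul_apply, smul_eq_mul]
    field_simp
    ring
  intro μ
  exact ⟨main μ, by rw [Lp_swap_eq_La c σ ν hdν]; exact main μ⟩
end
end

section
/- Let σ, ν be Minkowski velocities with ⟨σ,ν⟩ > 0, and let ν̃ := 2(⟨σ,ν⟩/c²)·σ − ν be the velocity opposite to ν in the three-dimensional sense. Then the passive boost with the opposite velocity equals the active boost: for every μ ∈ ℝ⁴, Lp(σ,ν̃)μ = La(σ,ν)μ. -/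
noncomputable section

lemma mink_sub_right (u v w : Fin 4 → ℝ) : mink u (v - w) = mink u v - mink u w := by
  simp [mink, Pi.sub_apply]; ring

lemma mink_smul_right (a : ℝ) (u v : Fin 4 → ℝ) : mink u (a • v) = a * mink u v := by
  simp [mink, Pi.smul_apply, smul_eq_mul]; ring

theorem passive_opposite_eq_active (c : ℝ) (hc : 0 < c) (σ ν : Fin 4 → ℝ)
    (hσ : mink σ σ = c ^ 2) (hν : mink ν ν = c ^ 2)
    (hσν : 0 < mink σ ν) :
    ∀ μ : Fin 4 → ℝ,
      Lp c σ ((2 * mink σ ν / c ^ 2) • σ - ν) μ = La c σ ν μ := by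
  intro μ
  have hc2 : (c : ℝ) ^ 2 ≠ 0 := by positivity
  have hden : c ^ 2 + mink σ ν ≠ 0 := by positivity
  set k := mink σ ν with hk
  set mσ := mink μ σ with hmσ
  set mν := mink μ ν with hmν
  have hνσ : mink ν σ = k := by simp [mink, hk]; ring
  have h1 : mink σ ((2 * k / c ^ 2) • σ - ν + σ) = c ^ 2 + k := by
    rw [mink_add_right, mink_sub_right, mink_smul_right, hσ]
    field_simp
    ring
  have h2 : mink μ ((2 * k / c ^ 2) • σ - ν + σ) = (2 * k / c ^ 2 + 1) * mσ - mν := by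
    rw [mink_add_right, mink_sub_right, mink_smul_right]
    ring
  have h3 : mink μ ((2 * k / c ^ 2) • σ - ν) = (2 * k / c ^ 2) * mσ - mν := by
    rw [mink_sub_right, mink_smul_right]
  have h4 : mink σ (ν + σ) = c ^ 2 + k := by
    rw [mink_add_right, hσ, ← hk]; ring
  have h5 : mink μ (ν + σ) = mν + mσ := by
    rw [mink_add_right]
  unfold Lp La
  rw [h1, h2, h3, h4, h5]
  funext i
  simp only [Pi.add_apply, Pi.sub_apply, Pi.smul_apply, smul_eq_mul]
  field_simp
  ring
end
end
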